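/- (Reduction of the multitangent function Ψ_{3,2} into monotangent functions) For every τ in the complex upper half-plane, ∑_{n1>n2, n1,n2∈ℤ} 1/((τ+n1)^3·(τ+n2)^2) = 3·ζ(3)·∑_{n∈ℤ} 1/(τ+n)^2 + ζ(2)·∑_{n∈ℤ} 1/(τ+n)^3, all three series being absolutely convergent. -/

import Mathlib

open Filter Finset Topology

namespace MT32
variable {τ : ℂ}

lemma hne (hτ : τ.im ≠ 0) (n : ℤ) : τ + (n : ℂ) ≠ 0 := by
  intro h
  apply hτ
  have := congrArg Complex.im h
  simpa using this

lemma summable_aux (hτ : τ.im ≠ 0) {k : ℕ} (hk : 2 ≤ k) :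
    Summable fun n : ℤ => 1 / ‖τ + (n : ℂ)‖ ^ k := by
  have hbase : Summable fun n : ℤ => 1 / |(n : ℝ) + τ.re| ^ k := by
    have := (Real.summable_one_div_int_add_rpow τ.re k).mpr (by exact_mod_cast by omega)
    simpa [Real.rpow_natCast] using this
  apply Summable.of_norm_bounded_eventually hbase
  have hfin : {n : ℤ | (n : ℝ) + τ.re = 0}.Finite := by
    apply Set.Subsingleton.finite
    intro a ha b hb
    have : (a : ℝ) = (b : ℝ) := by
      simp only [Set.mem_setOf_eq] at ha hb; linarith
    exact_mod_cast this
  filter_upwards [hfin.compl_mem_cofinite] with n hn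
  simp only [Set.mem_compl_iff, Set.mem_setOf_eq] at hn
  have h1 : 0 < |(n : ℝ) + τ.re| := abs_pos.mpr hn
  have h2 : |(n : ℝ) + τ.re| ≤ ‖τ + (n : ℂ)‖ := by
    have := Complex.abs_re_le_norm (τ + n)
    simpa [Complex.add_re, add_comm] using this
  rw [Real.norm_eq_abs, abs_of_nonneg (by positivity)]
  exact one_div_le_one_div_of_le (pow_pos h1 k) (pow_le_pow_left₀ h1.le h2 k)

end MT32

namespace MT32

lemma summable_uv (hτ : τ.im ≠ 0) (c : ℤ) :
    Summable fun n : ℤ => 1 / ((τ + (n : ℂ)) * (τ + ((n - c : ℤ) : ℂ))) := by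
  have h1 := summable_aux (τ := τ) hτ (le_refl 2)
  have h2 : Summable fun n : ℤ => 1 / ‖τ + ((n - c : ℤ) : ℂ)‖ ^ 2 :=
    ((Equiv.subRight c).summable_iff (f := fun n : ℤ => 1 / ‖τ + (n : ℂ)‖ ^ 2)).mpr h1
  apply Summable.of_norm_bounded (((h1.add h2).div_const 2))
  intro n
  have hu := hne hτ n
  have hv := hne hτ (n - c)
  have hu' : (0:ℝ) < ‖τ + (n : ℂ)‖ := norm_pos_iff.mpr hu
  have hv' : (0:ℝ) < ‖τ + ((n - c : ℤ) : ℂ)‖ := norm_pos_iff.mpr hv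
  rw [norm_div, norm_one, norm_mul]
  rw [div_le_div_iff₀ (by positivity) (by positivity)]
  have key : 2 * (‖τ + (n : ℂ)‖ * ‖τ + ((n - c : ℤ) : ℂ)‖) ≤
      ‖τ + (n : ℂ)‖ ^ 2 + ‖τ + ((n - c : ℤ) : ℂ)‖ ^ 2 := by
    nlinarith [sq_nonneg (‖τ + (n : ℂ)‖ - ‖τ + ((n - c : ℤ) : ℂ)‖)]
  have gen : ∀ a b : ℝ, 0 < a → 0 < b →
      (1/a^2 + 1/b^2) * (a*b) = (a^2+b^2)/(a*b) := by
    intro a b ha hb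
    field_simp
    ring
  rw [gen _ _ hu' hv', le_div_iff₀ (by positivity)]
  nlinarith [key]

end MT32

namespace MT32

lemma tsum_uv_zero (hτ : τ.im ≠ 0) (c : ℤ) (hc : 0 < c) :
    ∑' n : ℤ, 1 / ((τ + (n : ℂ)) * (τ + ((n - c : ℤ) : ℂ))) = 0 := by
  set h : ℤ → ℂ := fun n => 1 / (τ + (n : ℂ)) with hh
  set f : ℤ → ℂ := fun n => 1 / ((τ + (n : ℂ)) * (τ + ((n - c : ℤ) : ℂ))) with hf
  have hsum : Summable f := summable_uv hτ c
  set S := ∑' n : ℤ, f n with hSdef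
  have hS : HasSum f S := hsum.hasSum
  set g : ℤ → ℂ := fun n => h (n - c) - h n with hg
  have hgf : ∀ n : ℤ, g n = (c : ℂ) * f n := by
    intro n
    have hu := hne hτ n
    have hv := hne hτ (n - c)
    simp only [hg, hh, hf]
    have hrel : ((n - c : ℤ) : ℂ) = (n : ℂ) - (c : ℂ) := by push_cast; ring
    rw [hrel] at hv ⊢
    field_simp
    ring_nf
  have hgS : HasSum g ((c : ℂ) * S) := by
    have := hS.mul_left (c : ℂ)
    exact this.congr_fun hgf
  set I : ℕ → Finset ℤ := fun N => Finset.Ioc (-(N:ℤ)-1) (N:ℤ) with hIdef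
  have hImono : Monotone I := by
    intro p q hpq
    apply Finset.Ioc_subset_Ioc <;> omega
  have hItop : Tendsto I atTop atTop :=
    tendsto_atTop_finset_of_monotone hImono
      (fun x => ⟨x.natAbs, by simp only [hIdef, Finset.mem_Ioc]; omega⟩)
  have hT : Tendsto (fun N => ∑ n ∈ I N, g n) atTop (𝓝 ((c:ℂ)*S)) :=
    (hgS : Tendsto (fun s : Finset ℤ => ∑ n ∈ s, g n) atTop (𝓝 ((c:ℂ)*S))).comp hItop
  set d : ℝ := 1 - (c:ℝ) - ‖τ‖ with hd
  have hbound : ∀ᶠ N : ℕ in atTop,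
      ‖∑ n ∈ I N, g n‖ ≤ 2 * (c:ℝ) * (1 / ((N:ℝ) + d)) := by
    have hev1 : ∀ᶠ N : ℕ in atTop, c.toNat ≤ N := eventually_ge_atTop c.toNat
    have hev2 : ∀ᶠ N : ℕ in atTop, 0 < (N:ℝ) + d := by
      have h1 : Tendsto (fun N : ℕ => (N:ℝ) + d) atTop atTop :=
        tendsto_atTop_add_const_right _ d tendsto_natCast_atTop_atTop
      exact h1.eventually_gt_atTop 0
    filter_upwards [hev1, hev2] with N hN1 hN2
    have hcN : c ≤ (N:ℤ) := by omega
    set a : ℤ := -(N:ℤ)-1 with ha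
    -- reindex the shifted sum
    have e2 : ∑ n ∈ I N, h (n - c) = ∑ n ∈ Finset.Ioc (a - c) ((N:ℤ) - c), h n := by
      have himg : (Finset.Ioc (a - c) ((N:ℤ) - c)).image (· + c) = I N := by
        rw [Finset.image_add_right_Ioc, hIdef]
        congr 1 <;> omega
      rw [← himg, Finset.sum_image (by intro x _ y _ hxy; simp only at hxy; omega)]
      apply Finset.sum_congr rfl
      intro x _
      congr 1
      omega
    have hdisj : ∀ x y z : ℤ, Disjoint (Finset.Ioc x y) (Finset.Ioc y z) := by
      intro x y z
      rw [Finset.disjoint_left]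
      intro t ht ht'
      simp only [Finset.mem_Ioc] at ht ht'
      omega
    have e3 : ∑ n ∈ Finset.Ioc (a - c) ((N:ℤ) - c), h n =
        (∑ n ∈ Finset.Ioc (a - c) a, h n) + ∑ n ∈ Finset.Ioc a ((N:ℤ) - c), h n := by
      rw [← Finset.sum_union (hdisj _ _ _), Finset.Ioc_union_Ioc_eq_Ioc (by omega) (by omega)]
    have e4 : ∑ n ∈ I N, h n =
        (∑ n ∈ Finset.Ioc a ((N:ℤ) - c), h n) + ∑ n ∈ Finset.Ioc ((N:ℤ) - c) (N:ℤ), h n := by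
      rw [← Finset.sum_union (hdisj _ _ _), Finset.Ioc_union_Ioc_eq_Ioc (by omega) (by omega)]
    have hsplit : ∑ n ∈ I N, g n =
        (∑ n ∈ Finset.Ioc (a - c) a, h n) - ∑ n ∈ Finset.Ioc ((N:ℤ) - c) (N:ℤ), h n := by
      have e1 : ∑ n ∈ I N, g n = (∑ n ∈ I N, h (n - c)) - ∑ n ∈ I N, h n :=
        Finset.sum_sub_distrib _ _
      rw [e1, e2, e3, e4]
      ring
    -- term bounds
    have hterm : ∀ n : ℤ, ((N:ℝ) - (c:ℝ) + 1 ≤ |(n:ℝ)|) → ‖h n‖ ≤ 1 / ((N:ℝ) + d) := by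
      intro n hn
      have hnorm : (N:ℝ) + d ≤ ‖τ + (n:ℂ)‖ := by
        have h1 : ‖(n:ℂ)‖ - ‖τ‖ ≤ ‖τ + (n:ℂ)‖ := by
          have := norm_sub_norm_le ((n:ℂ)) (-τ)
          simpa [add_comm, sub_neg_eq_add] using this
        have h2 : ‖(n:ℂ)‖ = |(n:ℝ)| := by
          rw [← Complex.ofReal_intCast, Complex.norm_real, Real.norm_eq_abs]
        rw [hd]
        rw [h2] at h1
        linarith
      rw [hh]
      simp only [norm_div, norm_one]
      exact one_div_le_one_div_of_le hN2 hnorm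
    have hcard1 : (Finset.Ioc (a - c) a).card = c.toNat := by
      rw [Int.card_Ioc]; congr 1; omega
    have hcard2 : (Finset.Ioc ((N:ℤ) - c) (N:ℤ)).card = c.toNat := by
      rw [Int.card_Ioc]; congr 1; omega
    have hX : ‖∑ n ∈ Finset.Ioc (a - c) a, h n‖ ≤ (c:ℝ) * (1 / ((N:ℝ) + d)) := by
      refine le_trans (norm_sum_le _ _) ?_
      refine le_trans (Finset.sum_le_card_nsmul _ _ (1 / ((N:ℝ) + d)) ?_) ?_
      · intro n hn
        simp only [Finset.mem_Ioc] at hn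
        apply hterm
        have : (N:ℤ) - c + 1 ≤ |n| := le_abs.mpr (Or.inr (by omega))
        calc (N:ℝ) - (c:ℝ) + 1 = (((N:ℤ) - c + 1 : ℤ) : ℝ) := by push_cast; ring
          _ ≤ ((|n| : ℤ) : ℝ) := by exact_mod_cast this
          _ = |(n:ℝ)| := by push_cast; rfl
      · rw [hcard1, nsmul_eq_mul]
        gcongr
        exact le_of_eq (by exact_mod_cast congrArg (Int.cast : ℤ → ℝ) (Int.toNat_of_nonneg hc.le))
    have hY : ‖∑ n ∈ Finset.Ioc ((N:ℤ) - c) (N:ℤ), h n‖ ≤ (c:ℝ) * (1 / ((N:ℝ) + d)) := by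
      refine le_trans (norm_sum_le _ _) ?_
      refine le_trans (Finset.sum_le_card_nsmul _ _ (1 / ((N:ℝ) + d)) ?_) ?_
      · intro n hn
        simp only [Finset.mem_Ioc] at hn
        apply hterm
        have : (N:ℤ) - c + 1 ≤ |n| := le_abs.mpr (Or.inl (by omega))
        calc (N:ℝ) - (c:ℝ) + 1 = (((N:ℤ) - c + 1 : ℤ) : ℝ) := by push_cast; ring
          _ ≤ ((|n| : ℤ) : ℝ) := by exact_mod_cast this
          _ = |(n:ℝ)| := by push_cast; rfl
      · rw [hcard2, nsmul_eq_mul]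
        gcongr
        exact le_of_eq (by exact_mod_cast congrArg (Int.cast : ℤ → ℝ) (Int.toNat_of_nonneg hc.le))
    calc ‖∑ n ∈ I N, g n‖
        = ‖(∑ n ∈ Finset.Ioc (a - c) a, h n) - ∑ n ∈ Finset.Ioc ((N:ℤ) - c) (N:ℤ), h n‖ := by
          rw [hsplit]
      _ ≤ ‖∑ n ∈ Finset.Ioc (a - c) a, h n‖ + ‖∑ n ∈ Finset.Ioc ((N:ℤ) - c) (N:ℤ), h n‖ :=
          norm_sub_le _ _
      _ ≤ (c:ℝ) * (1 / ((N:ℝ) + d)) + (c:ℝ) * (1 / ((N:ℝ) + d)) := add_le_add hX hY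
      _ = 2 * (c:ℝ) * (1 / ((N:ℝ) + d)) := by ring
  have hzero : Tendsto (fun N : ℕ => 2 * (c:ℝ) * (1 / ((N:ℝ) + d))) atTop (𝓝 0) := by
    have h1 : Tendsto (fun N : ℕ => (N:ℝ) + d) atTop atTop :=
      tendsto_atTop_add_const_right _ d tendsto_natCast_atTop_atTop
    have h2 := h1.inv_tendsto_atTop
    have h3 := h2.const_mul (2 * (c:ℝ))
    simpa [one_div, mul_zero] using h3
  have hT0 : Tendsto (fun N => ∑ n ∈ I N, g n) atTop (𝓝 0) :=
    squeeze_zero_norm' hbound hzero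
  have hcS : (c:ℂ) * S = 0 := tendsto_nhds_unique hT hT0
  have hc' : (c:ℂ) ≠ 0 := by
    simp only [ne_eq, Int.cast_eq_zero]
    omega
  exact (mul_eq_zero.mp hcS).resolve_left hc'

end MT32

namespace MT32

lemma summable_pow (hτ : τ.im ≠ 0) {k : ℕ} (hk : 2 ≤ k) :
    Summable fun n : ℤ => 1 / (τ + (n : ℂ)) ^ k := by
  apply Summable.of_norm
  refine (summable_aux hτ hk).congr fun n => ?_
  simp [norm_div, norm_pow]

lemma tsum_shift_sq (c : ℤ) :
    ∑' n : ℤ, 1 / (τ + ((n - c : ℤ) : ℂ)) ^ 2 = ∑' n : ℤ, 1 / (τ + (n : ℂ)) ^ 2 :=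
  (Equiv.subRight c).tsum_eq (fun n : ℤ => 1 / (τ + (n : ℂ)) ^ 2)

lemma pf_aux (u v K : ℂ) (hu : u ≠ 0) (hv : v ≠ 0) (hK : K ≠ 0) (hrel : v = u - K) :
    1 / (u ^ 3 * v ^ 2) =
      (-3 / K ^ 3) * (1 / (u * v))
      + ((2 / K ^ 3) * (1 / u ^ 2)
      + ((1 / K ^ 2) * (1 / u ^ 3)
      + (1 / K ^ 3) * (1 / v ^ 2))) := by
  have hD : K ^ 3 * u ^ 3 * v ^ 2 ≠ 0 :=
    mul_ne_zero (mul_ne_zero (pow_ne_zero _ hK) (pow_ne_zero _ hu)) (pow_ne_zero _ hv)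
  have huv : u ^ 3 * v ^ 2 ≠ 0 := mul_ne_zero (pow_ne_zero _ hu) (pow_ne_zero _ hv)
  have h1 : (-3 / K ^ 3) * (1 / (u * v)) = (-3 * (u ^ 2 * v)) / (K ^ 3 * u ^ 3 * v ^ 2) := by
    rw [div_mul_div_comm,
      div_eq_div_iff (mul_ne_zero (pow_ne_zero _ hK) (mul_ne_zero hu hv)) hD]
    ring
  have h2 : (2 / K ^ 3) * (1 / u ^ 2) = (2 * (u * v ^ 2)) / (K ^ 3 * u ^ 3 * v ^ 2) := by
    rw [div_mul_div_comm,
      div_eq_div_iff (mul_ne_zero (pow_ne_zero _ hK) (pow_ne_zero _ hu)) hD]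
    ring
  have h3 : (1 / K ^ 2) * (1 / u ^ 3) = (K * v ^ 2) / (K ^ 3 * u ^ 3 * v ^ 2) := by
    rw [div_mul_div_comm,
      div_eq_div_iff (mul_ne_zero (pow_ne_zero _ hK) (pow_ne_zero _ hu)) hD]
    ring
  have h4 : (1 / K ^ 3) * (1 / v ^ 2) = (u ^ 3) / (K ^ 3 * u ^ 3 * v ^ 2) := by
    rw [div_mul_div_comm,
      div_eq_div_iff (mul_ne_zero (pow_ne_zero _ hK) (pow_ne_zero _ hv)) hD]
    ring
  rw [h1, h2, h3, h4, ← add_div, ← add_div, ← add_div,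
    div_eq_div_iff huv hD]
  subst hrel
  ring

lemma inner_sum (hτ : τ.im ≠ 0) (m : ℕ) :
    ∑' n : ℤ, 1 / ((τ + (n : ℂ)) ^ 3 * (τ + ((n - ((m : ℤ) + 1) : ℤ) : ℂ)) ^ 2) =
      (1 / ((m : ℂ) + 1) ^ 3) * (3 * ∑' n : ℤ, 1 / (τ + (n : ℂ)) ^ 2)
      + (1 / ((m : ℂ) + 1) ^ 2) * (∑' n : ℤ, 1 / (τ + (n : ℂ)) ^ 3) := by
  have hK : (m : ℂ) + 1 ≠ 0 := by
    have h1 : ((m + 1 : ℕ) : ℂ) ≠ 0 := Nat.cast_ne_zero.mpr (Nat.succ_ne_zero m)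
    push_cast at h1
    exact h1
  have hvu : ∀ n : ℤ, τ + ((n - ((m : ℤ) + 1) : ℤ) : ℂ) = (τ + (n : ℂ)) - ((m : ℂ) + 1) := by
    intro n; push_cast; ring
  have hpt : ∀ n : ℤ, 1 / ((τ + (n : ℂ)) ^ 3 * (τ + ((n - ((m : ℤ) + 1) : ℤ) : ℂ)) ^ 2) =
      (-3 / ((m : ℂ) + 1) ^ 3) * (1 / ((τ + (n : ℂ)) * (τ + ((n - ((m : ℤ) + 1) : ℤ) : ℂ))))
      + ((2 / ((m : ℂ) + 1) ^ 3) * (1 / (τ + (n : ℂ)) ^ 2)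
      + ((1 / ((m : ℂ) + 1) ^ 2) * (1 / (τ + (n : ℂ)) ^ 3)
      + (1 / ((m : ℂ) + 1) ^ 3) * (1 / (τ + ((n - ((m : ℤ) + 1) : ℤ) : ℂ)) ^ 2))) := by
    intro n
    have hu := hne hτ n
    have hv := hne hτ (n - ((m : ℤ) + 1))
    exact pf_aux _ _ _ hu hv hK (hvu n)
  have s_a : Summable fun n : ℤ =>
      (-3 / ((m : ℂ) + 1) ^ 3) * (1 / ((τ + (n : ℂ)) * (τ + ((n - ((m : ℤ) + 1) : ℤ) : ℂ)))) :=
    (summable_uv hτ _).mul_left _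
  have s_b : Summable fun n : ℤ => (2 / ((m : ℂ) + 1) ^ 3) * (1 / (τ + (n : ℂ)) ^ 2) :=
    (summable_pow hτ (le_refl 2)).mul_left _
  have s_c : Summable fun n : ℤ => (1 / ((m : ℂ) + 1) ^ 2) * (1 / (τ + (n : ℂ)) ^ 3) :=
    (summable_pow hτ (by omega : 2 ≤ 3)).mul_left _
  have s_d : Summable fun n : ℤ =>
      (1 / ((m : ℂ) + 1) ^ 3) * (1 / (τ + ((n - ((m : ℤ) + 1) : ℤ) : ℂ)) ^ 2) := by
    apply Summable.mul_left
    exact ((Equiv.subRight ((m : ℤ) + 1)).summable_iff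
      (f := fun n : ℤ => 1 / (τ + (n : ℂ)) ^ 2)).mpr (summable_pow hτ (le_refl 2))
  rw [tsum_congr hpt, Summable.tsum_add s_a (s_b.add (s_c.add s_d)), Summable.tsum_add s_b (s_c.add s_d),
    Summable.tsum_add s_c s_d, tsum_mul_left, tsum_mul_left, tsum_mul_left, tsum_mul_left,
    tsum_uv_zero hτ _ (by omega), tsum_shift_sq ((m : ℤ) + 1)]
  ring

end MT32

namespace MT32

def eqv : ℕ × ℤ ≃ {p : ℤ × ℤ // p.2 < p.1} where
  toFun x := ⟨(x.2, x.2 - ((x.1 : ℤ) + 1)), by omega⟩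
  invFun p := ((p.1.1 - p.1.2 - 1).toNat, p.1.1)
  left_inv x := by
    rcases x with ⟨m, n⟩
    simp only [Prod.mk.injEq]
    exact ⟨by omega, trivial⟩
  right_inv p := by
    rcases p with ⟨⟨a, b⟩, hp⟩
    simp only [Subtype.mk.injEq, Prod.mk.injEq]
    simp only at hp
    exact ⟨trivial, by omega⟩

lemma zsum (k : ℕ) (hk : 2 ≤ k) : Summable fun m : ℕ => 1 / ((m : ℂ) + 1) ^ k := by
  apply Summable.of_norm
  have hr : Summable fun m : ℕ => 1 / ((m : ℝ) + 1) ^ k := by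
    have h0 : Summable fun n : ℕ => 1 / (n : ℝ) ^ k :=
      Real.summable_one_div_nat_pow.mpr (by omega)
    have := h0.comp_injective Nat.succ_injective
    refine this.congr fun m => ?_
    simp only [Function.comp_apply, Nat.succ_eq_add_one]
    push_cast
    ring
  refine hr.congr fun m => ?_
  have hcast : ((m : ℂ) + 1) = ((m + 1 : ℕ) : ℂ) := by push_cast; ring
  rw [hcast, norm_div, norm_one, norm_pow, Complex.norm_natCast]
  push_cast
  ring

end MT32

set_option maxHeartbeats 1000000 in
open MT32 in
/-- Reduction of the multitangent function `Ψ_{3,2}` into monotangent functions: for `τ` in the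
upper half-plane,
`∑_{n₁>n₂} 1/((τ+n₁)³(τ+n₂)²) = 3·ζ(3)·∑_{n∈ℤ} 1/(τ+n)² + ζ(2)·∑_{n∈ℤ} 1/(τ+n)³`,
all three series being absolutely convergent. -/
theorem multitangent_three_two_reduction (τ : ℂ) (hτ : 0 < τ.im) :
    Summable (fun p : {p : ℤ × ℤ // p.2 < p.1} =>
      ‖1 / ((τ + (p.1.1 : ℂ)) ^ 3 * (τ + (p.1.2 : ℂ)) ^ 2)‖) ∧
    Summable (fun n : ℤ => ‖1 / (τ + (n : ℂ)) ^ 2‖) ∧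
    Summable (fun n : ℤ => ‖1 / (τ + (n : ℂ)) ^ 3‖) ∧
    (∑' p : {p : ℤ × ℤ // p.2 < p.1}, 1 / ((τ + (p.1.1 : ℂ)) ^ 3 * (τ + (p.1.2 : ℂ)) ^ 2)) =
      3 * ((∑' n : ℕ, (1 : ℝ) / ((n : ℝ) + 1) ^ 3 : ℝ) : ℂ) * (∑' n : ℤ, 1 / (τ + (n : ℂ)) ^ 2)
      + ((∑' n : ℕ, (1 : ℝ) / ((n : ℝ) + 1) ^ 2 : ℝ) : ℂ) * (∑' n : ℤ, 1 / (τ + (n : ℂ)) ^ 3) := by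
  have hτ' : τ.im ≠ 0 := ne_of_gt hτ
  have habs : ∀ x : ℝ, 0 ≤ x → ‖x‖ = x := fun x hx => by rw [Real.norm_eq_abs, abs_of_nonneg hx]
  -- summability of the double series (norms)
  have h3 := summable_aux hτ' (by omega : 2 ≤ 3)
  have h2 := summable_aux hτ' (le_refl 2)
  have hprod : Summable fun q : ℤ × ℤ => (1 / ‖τ + (q.1 : ℂ)‖ ^ 3) * (1 / ‖τ + (q.2 : ℂ)‖ ^ 2) := by
    have ha : Summable fun n : ℤ => ‖1 / ‖τ + (n : ℂ)‖ ^ 3‖ :=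
      h3.congr fun n => (habs _ (by positivity)).symm
    have hb : Summable fun n : ℤ => ‖1 / ‖τ + (n : ℂ)‖ ^ 2‖ :=
      h2.congr fun n => (habs _ (by positivity)).symm
    exact summable_mul_of_summable_norm (R := ℝ) (f := fun n : ℤ => 1 / ‖τ + (n : ℂ)‖ ^ 3)
      (g := fun n : ℤ => 1 / ‖τ + (n : ℂ)‖ ^ 2) ha hb
  have hconj1 : Summable (fun p : {p : ℤ × ℤ // p.2 < p.1} =>
      ‖1 / ((τ + (p.1.1 : ℂ)) ^ 3 * (τ + (p.1.2 : ℂ)) ^ 2)‖) := by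
    refine (hprod.subtype {p : ℤ × ℤ | p.2 < p.1}).congr fun p => ?_
    simp only [Function.comp_apply]
    rw [norm_div, norm_one, norm_mul, norm_pow, norm_pow, one_div_mul_one_div]
  have hconj2 : Summable fun n : ℤ => ‖1 / (τ + (n : ℂ)) ^ 2‖ :=
    h2.congr fun n => by simp [norm_div, norm_pow]
  have hconj3 : Summable fun n : ℤ => ‖1 / (τ + (n : ℂ)) ^ 3‖ :=
    h3.congr fun n => by simp [norm_div, norm_pow]
  refine ⟨hconj1, hconj2, hconj3, ?_⟩
  -- the main identity
  set f : {p : ℤ × ℤ // p.2 < p.1} → ℂ :=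
    fun p => 1 / ((τ + (p.1.1 : ℂ)) ^ 3 * (τ + (p.1.2 : ℂ)) ^ 2) with hfdef
  have hf : Summable f := Summable.of_norm hconj1
  have hsum_e : Summable fun x : ℕ × ℤ => f (eqv x) := eqv.summable_iff.mpr hf
  rw [← eqv.tsum_eq f, Summable.tsum_prod hsum_e]
  have hinner : ∀ m : ℕ, ∑' n : ℤ, f (eqv (m, n)) =
      (1 / ((m : ℂ) + 1) ^ 3) * (3 * ∑' n : ℤ, 1 / (τ + (n : ℂ)) ^ 2)
      + (1 / ((m : ℂ) + 1) ^ 2) * (∑' n : ℤ, 1 / (τ + (n : ℂ)) ^ 3) := by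
    intro m
    rw [← inner_sum hτ' m]
    apply tsum_congr
    intro n
    rfl
  rw [tsum_congr hinner]
  have hs1 : Summable fun m : ℕ =>
      (1 / ((m : ℂ) + 1) ^ 3) * (3 * ∑' n : ℤ, 1 / (τ + (n : ℂ)) ^ 2) :=
    (zsum 3 (by omega)).mul_right _
  have hs2 : Summable fun m : ℕ =>
      (1 / ((m : ℂ) + 1) ^ 2) * (∑' n : ℤ, 1 / (τ + (n : ℂ)) ^ 3) :=
    (zsum 2 (by omega)).mul_right _
  rw [Summable.tsum_add hs1 hs2, tsum_mul_right, tsum_mul_right]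
  have hz3 : ((∑' n : ℕ, (1 : ℝ) / ((n : ℝ) + 1) ^ 3 : ℝ) : ℂ) = ∑' m : ℕ, 1 / ((m : ℂ) + 1) ^ 3 := by
    rw [Complex.ofReal_tsum]
    apply tsum_congr
    intro m
    push_cast
    ring
  have hz2 : ((∑' n : ℕ, (1 : ℝ) / ((n : ℝ) + 1) ^ 2 : ℝ) : ℂ) = ∑' m : ℕ, 1 / ((m : ℂ) + 1) ^ 2 := by
    rw [Complex.ofReal_tsum]
    apply tsum_congr
    intro m
    push_cast
    ring
  rw [hz3, hz2]
  ring
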